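/- Let A be a finite nonempty index set and let Z be a positive definite real symmetric matrix indexed by A × A. Then the sum of all entries of Z⁻¹ equals the supremum over nonzero vectors x ∈ ℝ^A of (∑_{a∈A} x_a)² / (xᵀ Z x), and this supremum is attained exactly when x is a nonzero scalar multiple of the unique vector w satisfying Z w = 𝟙 (the all-ones vector). -/

import Mathlib

open Matrix BigOperators

/-- For a positive definite real symmetric matrix `Z` indexed by a finite
nonempty set `A`, the sum of the entries of `Z⁻¹` equals the supremum of the quotients
`(∑ a, x a)² / (xᵀ Z x)` over nonzero `x`, and the supremum is attained exactly at the
nonzero scalar multiples of the unique weighting `w` with `Z w = 𝟙`. -/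

lemma B_symm {A : Type*} [Fintype A] (Z : Matrix A A ℝ) (hZ : Z.IsHermitian)
    (x y : A → ℝ) : x ⬝ᵥ Z *ᵥ y = y ⬝ᵥ Z *ᵥ x := by
  have hs : Zᵀ = Z := by simpa using hZ.eq
  calc x ⬝ᵥ Z *ᵥ y = (x ᵥ* Z) ⬝ᵥ y := dotProduct_mulVec _ _ _
    _ = (Z *ᵥ x) ⬝ᵥ y := by rw [← vecMul_transpose, hs]
    _ = y ⬝ᵥ Z *ᵥ x := dotProduct_comm _ _

lemma cs_eq {A : Type*} [Fintype A] (Z : Matrix A A ℝ) (hZ : Z.PosDef) (x y : A → ℝ)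
    (hy : y ≠ 0) :
    (x ⬝ᵥ Z *ᵥ y) ^ 2 ≤ (x ⬝ᵥ Z *ᵥ x) * (y ⬝ᵥ Z *ᵥ y) ∧
    ((x ⬝ᵥ Z *ᵥ y) ^ 2 = (x ⬝ᵥ Z *ᵥ x) * (y ⬝ᵥ Z *ᵥ y) ↔ ∃ c : ℝ, x = c • y) := by
  have hyy : 0 < y ⬝ᵥ Z *ᵥ y := by simpa using hZ.dotProduct_mulVec_pos hy
  set t : ℝ := (x ⬝ᵥ Z *ᵥ y) / (y ⬝ᵥ Z *ᵥ y) with ht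
  have hsymm := B_symm Z hZ.1 y x
  have expand : (x - t • y) ⬝ᵥ Z *ᵥ (x - t • y)
      = x ⬝ᵥ Z *ᵥ x - (x ⬝ᵥ Z *ᵥ y) ^ 2 / (y ⬝ᵥ Z *ᵥ y) := by
    simp only [sub_dotProduct, dotProduct_sub, mulVec_sub, mulVec_smul, smul_dotProduct,
      dotProduct_smul, ht, hsymm, smul_eq_mul]
    field_simp
    ring
  have hnn : 0 ≤ (x - t • y) ⬝ᵥ Z *ᵥ (x - t • y) := by
    rcases eq_or_ne (x - t • y) 0 with h | h
    · simp [h]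
    · exact le_of_lt (by simpa using hZ.dotProduct_mulVec_pos h)
  constructor
  · rw [expand, sub_nonneg, div_le_iff₀ hyy] at hnn
    linarith
  constructor
  · intro heq
    have h0 : (x - t • y) ⬝ᵥ Z *ᵥ (x - t • y) = 0 := by
      rw [expand, heq, mul_div_assoc, div_self hyy.ne', mul_one, sub_self]
    have hz : x - t • y = 0 := by
      by_contra h
      exact absurd h0 (by simpa using (hZ.dotProduct_mulVec_pos h).ne')
    exact ⟨t, sub_eq_zero.mp hz⟩
  · rintro ⟨c, rfl⟩
    simp only [smul_dotProduct, mulVec_smul, dotProduct_smul, smul_eq_mul]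
    ring

open Matrix BigOperators


theorem stmt_0 {A : Type*} [Fintype A] [DecidableEq A] [Nonempty A]
    (Z : Matrix A A ℝ) (hZ : Z.PosDef) :
    (∃! w : A → ℝ, Z.mulVec w = fun _ => 1) ∧
    ∀ w : A → ℝ, Z.mulVec w = (fun _ => 1) →
      ((∑ a, ∑ b, Z⁻¹ a b) =
          sSup {r : ℝ | ∃ x : A → ℝ, x ≠ 0 ∧ r = (∑ a, x a) ^ 2 / (x ⬝ᵥ Z.mulVec x)} ∧
        ∀ x : A → ℝ, x ≠ 0 →
          ((∑ a, x a) ^ 2 / (x ⬝ᵥ Z.mulVec x) = ∑ a, ∑ b, Z⁻¹ a b ↔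
            ∃ c : ℝ, c ≠ 0 ∧ x = c • w)) := by
  have hdet : IsUnit Z.det := isUnit_iff_ne_zero.mpr hZ.det_pos.ne'
  have hinj : Function.Injective Z.mulVec := mulVec_injective_iff_isUnit.mpr hZ.isUnit
  set w0 : A → ℝ := Z⁻¹ *ᵥ (fun _ => 1) with hw0def
  have hw0 : Z.mulVec w0 = fun _ => 1 := by
    rw [hw0def, mulVec_mulVec, mul_nonsing_inv Z hdet, one_mulVec]
  refine ⟨⟨w0, hw0, fun y hy => hinj (hy.trans hw0.symm)⟩, ?_⟩
  intro w hw
  have hweq : w = w0 := hinj (hw.trans hw0.symm)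
  have hS : (∑ a, ∑ b, Z⁻¹ a b) = ∑ a, w a := by
    rw [hweq, hw0def]; simp [mulVec, dotProduct]
  have hwne : w ≠ 0 := by
    intro h
    have := congrFun (h ▸ hw) (Classical.arbitrary A)
    simp at this
  have hones : ∀ x : A → ℝ, (∑ a, x a) = x ⬝ᵥ Z *ᵥ w := by
    intro x; rw [hw]; simp [dotProduct]
  have hww : w ⬝ᵥ Z *ᵥ w = ∑ a, w a := by rw [hw]; simp [dotProduct]
  have hwwpos : 0 < w ⬝ᵥ Z *ᵥ w := by simpa using hZ.dotProduct_mulVec_pos hwne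
  have hS' : (∑ a, ∑ b, Z⁻¹ a b) = w ⬝ᵥ Z *ᵥ w := by rw [hS, hww]
  rw [hS']
  -- the key ratio facts
  have hub : ∀ x : A → ℝ, x ≠ 0 →
      (∑ a, x a) ^ 2 / (x ⬝ᵥ Z *ᵥ x) ≤ w ⬝ᵥ Z *ᵥ w := by
    intro x hx
    have hxx : 0 < x ⬝ᵥ Z *ᵥ x := by simpa using hZ.dotProduct_mulVec_pos hx
    rw [hones x, div_le_iff₀ hxx]
    have := (cs_eq Z hZ x w hwne).1
    linarith
  constructor
  · have hmem : (w ⬝ᵥ Z *ᵥ w) ∈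
        {r : ℝ | ∃ x : A → ℝ, x ≠ 0 ∧ r = (∑ a, x a) ^ 2 / (x ⬝ᵥ Z *ᵥ x)} := by
      refine ⟨w, hwne, ?_⟩
      rw [hones w]; field_simp
    have hub' : (w ⬝ᵥ Z *ᵥ w) ∈
        upperBounds {r : ℝ | ∃ x : A → ℝ, x ≠ 0 ∧ r = (∑ a, x a) ^ 2 / (x ⬝ᵥ Z *ᵥ x)} := by
      rintro r ⟨x, hx, rfl⟩; exact hub x hx
    exact (IsGreatest.csSup_eq ⟨hmem, hub'⟩).symm
  · intro x hx
    have hxx : 0 < x ⬝ᵥ Z *ᵥ x := by simpa using hZ.dotProduct_mulVec_pos hx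
    rw [hones x, div_eq_iff hxx.ne']
    have hiff := (cs_eq Z hZ x w hwne).2
    constructor
    · intro h
      obtain ⟨c, hc⟩ := hiff.mp (by linarith)
      refine ⟨c, ?_, hc⟩
      rintro rfl
      simp at hc
      exact hx hc
    · rintro ⟨c, hc, rfl⟩
      have := hiff.mpr ⟨c, rfl⟩
      linarith
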